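/- For every integer d ≥ 2, in the circular-arc construction with n = d² the following holds: for any two distinct arcs r, r' ∈ R, at least one of the two arcs contains an integral subarc of length d − 2 that is disjoint from the other arc. -/

import Mathlib

/-- `x` modulo `m`, for real numbers. -/
noncomputable def rmod (x m : ℝ) : ℝ := x - m * ⌊x / m⌋

/-- The circumference `n = d²` of the circle of the construction. -/
def circum (d : ℕ) : ℝ := (d : ℝ) ^ 2

/-- The real representative `i·d + j` of the integer point `(i,j)_d`. -/
def ipt (d i j : ℕ) : ℝ := (i : ℝ) * d + j

/-- The arc `[a,b]` of the circle of circumference `m`, where `a, b` are the images of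
the reals `x, y`: the image of the interval `[x, x + ((y − x) mod m)]`. -/
noncomputable def arcCC (m x y : ℝ) : Set (AddCircle m) :=
  (fun t : ℝ => (t : AddCircle m)) '' Set.Icc x (x + rmod (y - x) m)

/-- The length of the arc `[a,b]`, namely `(y − x) mod m`. -/
noncomputable def arcLen (m x y : ℝ) : ℝ := rmod (y - x) m

/-- Indices `(i,j)`, `0 ≤ i,j < d`, `i ≠ j`, of the arcs `[(i,j)_d, (j,i)_d]` of the
construction having length at most `n/4`. -/
noncomputable def RIdx (d : ℕ) : Set (ℕ × ℕ) :=
  {q | q.1 < d ∧ q.2 < d ∧ q.1 ≠ q.2 ∧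
    arcLen (circum d) (ipt d q.1 q.2) (ipt d q.2 q.1) ≤ circum d / 4}

/-- The arc `[(i,j)_d, (j,i)_d]` indexed by `q = (i,j)`. -/
noncomputable def arcR (d : ℕ) (q : ℕ × ℕ) : Set (AddCircle (circum d)) :=
  arcCC (circum d) (ipt d q.1 q.2) (ipt d q.2 q.1)

/-- The set of starting points of arcs in `R`. -/
noncomputable def startPts (d : ℕ) : Set (AddCircle (circum d)) :=
  {p | ∃ q ∈ RIdx d, p = ((ipt d q.1 q.2 : ℝ) : AddCircle (circum d))}

/-- The set of ending points of arcs in `R`. -/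
noncomputable def endPts (d : ℕ) : Set (AddCircle (circum d)) :=
  {p | ∃ q ∈ RIdx d, p = ((ipt d q.2 q.1 : ℝ) : AddCircle (circum d))}

/-- The intersection graph `G_R` of the arcs of the construction. -/
noncomputable def GR (d : ℕ) : SimpleGraph (RIdx d) where
  Adj q q' := q ≠ q' ∧ (arcR d q ∩ arcR d q').Nonempty
  symm := by
    constructor
    rintro q q' ⟨h1, h2⟩
    exact ⟨h1.symm, by rwa [Set.inter_comm]⟩
  loopless := ⟨fun q h => h.1 rfl⟩


lemma rmod_nonneg {m : ℝ} (hm : 0 < m) (x : ℝ) : 0 ≤ rmod x m := by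
  unfold rmod
  have h := Int.floor_le (x / m)
  have := mul_le_mul_of_nonneg_left h hm.le
  rw [mul_div_cancel₀ _ hm.ne'] at this
  linarith

lemma rmod_lt {m : ℝ} (hm : 0 < m) (x : ℝ) : rmod x m < m := by
  unfold rmod
  have h := Int.lt_floor_add_one (x / m)
  have := mul_lt_mul_of_pos_left h hm
  rw [mul_div_cancel₀ _ hm.ne'] at this
  nlinarith

lemma rmod_eq_self {m x : ℝ} (hm : 0 < m) (h0 : 0 ≤ x) (h1 : x < m) : rmod x m = x := by
  unfold rmod
  rw [Int.floor_eq_zero_iff.mpr ⟨div_nonneg h0 hm.le, (div_lt_one hm).mpr h1⟩]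
  simp

lemma rmod_eq_add_self {m x : ℝ} (hm : 0 < m) (h0 : -m ≤ x) (h1 : x < 0) : rmod x m = x + m := by
  unfold rmod
  have h : ⌊x / m⌋ = -1 := by
    rw [Int.floor_eq_iff]
    constructor
    · push_cast
      exact (le_div_iff₀ hm).mpr (by linarith)
    · push_cast
      simpa using div_neg_of_neg_of_pos h1 hm
  rw [h]; push_cast; ring

lemma rmod_add_int_mul {m : ℝ} (hm : m ≠ 0) (x : ℝ) (k : ℤ) : rmod (x + k * m) m = rmod x m := by
  unfold rmod
  rw [add_div, mul_div_assoc, div_self hm, mul_one, Int.floor_add_intCast]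
  push_cast
  ring

lemma rmod_intCast {z N : ℤ} (hN : 0 < N) : rmod (z : ℝ) (N : ℝ) = ((z % N : ℤ) : ℝ) := by
  have h : (z:ℝ) = ((z % N : ℤ) : ℝ) + ((z / N : ℤ) : ℝ) * (N:ℝ) := by
    push_cast [Int.emod_def]
    ring
  rw [h, rmod_add_int_mul (by positivity) _ _,
    rmod_eq_self (by exact_mod_cast hN) (by exact_mod_cast Int.emod_nonneg z hN.ne')
      (by exact_mod_cast Int.emod_lt_of_pos z hN)]

lemma coe_add_int_mul (n s : ℝ) (k : ℤ) : ((s + k * n : ℝ) : AddCircle n) = (s : AddCircle n) := by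
  have h : ((k * n : ℝ) : AddCircle n) = 0 :=
    (QuotientAddGroup.eq_zero_iff _).mpr ⟨k, by simp [zsmul_eq_mul]⟩
  rw [show ((s + k*n :ℝ) : AddCircle n) = (s : AddCircle n) + ((k*n:ℝ) : AddCircle n) by norm_cast,
    h, add_zero]

lemma coe_eq_sub (n s t : ℝ) (h : (s : AddCircle n) = (t : AddCircle n)) : ∃ k : ℤ, s - t = k * n := by
  obtain ⟨k, hk⟩ := (QuotientAddGroup.eq (s := AddSubgroup.zmultiples n) (a := s) (b := t)).mp h
  exact ⟨-k, by simp [zsmul_eq_mul] at hk; push_cast; linarith⟩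

lemma arc_subset {n : ℝ} (hn : 0 < n) {x a c L : ℝ}
    (h : rmod (x - a) n + c ≤ L) :
    (fun t : ℝ => (t : AddCircle n)) '' Set.Icc x (x + c) ⊆
      (fun t : ℝ => (t : AddCircle n)) '' Set.Icc a (a + L) := by
  rintro _ ⟨s, hs, rfl⟩
  have hv0 : 0 ≤ rmod (x - a) n := rmod_nonneg hn _
  have hfl : n * ⌊(x - a) / n⌋ = (x - a) - rmod (x - a) n := by unfold rmod; ring
  refine ⟨s - n * ⌊(x - a) / n⌋, ⟨?_, ?_⟩, ?_⟩
  · rw [hfl]; linarith [hs.1]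
  · rw [hfl]; linarith [hs.2]
  · show ((s - n * ⌊(x - a) / n⌋ : ℝ) : AddCircle n) = (s : AddCircle n)
    rw [show s - n * ⌊(x - a)/n⌋ = s + (-⌊(x - a)/n⌋ : ℤ) * n by push_cast; ring]
    exact coe_add_int_mul n s _

lemma arc_disjoint {n : ℝ} (hn : 0 < n) {x a' c L' : ℝ}
    (h1 : L' < rmod (x - a') n) (h2 : rmod (x - a') n + c < n) :
    Disjoint ((fun t : ℝ => (t : AddCircle n)) '' Set.Icc x (x + c))
      ((fun t : ℝ => (t : AddCircle n)) '' Set.Icc a' (a' + L')) := by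
  rw [Set.disjoint_left]
  rintro _ ⟨s, hs, rfl⟩ ⟨t, ht, hts⟩
  obtain ⟨k, hk⟩ := coe_eq_sub n t s hts
  have hv0 : 0 ≤ rmod (x - a') n := rmod_nonneg hn _
  have hvn : rmod (x - a') n < n := rmod_lt hn _
  have hrm : rmod (x - a') n = rmod ((t - a') - (s - x)) n := by
    rw [show x - a' = ((t - a') - (s - x)) + ((-k : ℤ) : ℝ) * n by push_cast; linarith]
    exact rmod_add_int_mul hn.ne' _ _
  rcases le_or_gt (s - x) (t - a') with h | h
  · rw [rmod_eq_self hn (by linarith) (by linarith [ht.2, hs.1] : (t - a') - (s - x) < n)] at hrm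
    linarith [ht.2, hs.1]
  · rw [rmod_eq_add_self hn (by linarith [ht.1, hs.2] : -n ≤ (t - a') - (s - x)) (by linarith)] at hrm
    linarith [ht.1, hs.2]

lemma emod_eq_of_rep {z N r k : ℤ} (h : z = r + N * k) (h0 : 0 ≤ r) (h1 : r < N) : z % N = r := by
  subst h
  rw [Int.add_mul_emod_self_left]
  exact Int.emod_eq_of_lt h0 h1

lemma int_small {D e : ℤ} (hD : 0 < D) (h1 : -(2*D) < D*e) (h2 : D*e < 2*D) : -1 ≤ e ∧ e ≤ 1 := by
  constructor
  · by_contra h; push_neg at h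
    have he : e ≤ -2 := by omega
    nlinarith
  · by_contra h; push_neg at h
    have he : 2 ≤ e := by omega
    nlinarith

lemma key_int {D u v s t k k' : ℤ} (hD : 2 ≤ D)
    (hu1 : -(D-1) ≤ u) (hu2 : u ≤ D-1) (hv1 : -(D-1) ≤ v) (hv2 : v ≤ D-1)
    (hs1 : -(D-2) ≤ s) (hs2 : s ≤ D-2) (ht1 : -(D-2) ≤ t) (ht2 : t ≤ D-2)
    (h1 : u*D + v = s + k*D^2) (h2 : v*D + u = t + k'*D^2) :
    (u = 0 ∧ v = 0) ∨ (u = D-1 ∧ v = D-1) ∨ (u = 1-D ∧ v = 1-D) := by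
  have hD0 : (0:ℤ) < D := by omega
  have hDne : (D:ℤ) ≠ 0 := by omega
  obtain ⟨e, he⟩ : ∃ e, v - s = D * e := ⟨k*D - u, by linear_combination h1⟩
  obtain ⟨he1, he2⟩ := int_small hD0 (by rw [← he]; omega) (by rw [← he]; omega)
  obtain ⟨f, hf⟩ : ∃ f, u - t = D * f := ⟨k'*D - v, by linear_combination h2⟩
  obtain ⟨hf1, hf2⟩ := int_small hD0 (by rw [← hf]; omega) (by rw [← hf]; omega)
  have h3 : u + e = D * k := by
    apply mul_left_cancel₀ hDne
    linear_combination h1 - he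
  have h4 : v + f = D * k' := by
    apply mul_left_cancel₀ hDne
    linear_combination h2 - hf
  have hk1 : -1 ≤ k ∧ k ≤ 1 := int_small hD0 (by rw [← h3]; omega) (by rw [← h3]; omega)
  have hk2 : -1 ≤ k' ∧ k' ≤ 1 := int_small hD0 (by rw [← h4]; omega) (by rw [← h4]; omega)
  obtain ⟨hk1a, hk1b⟩ := hk1
  obtain ⟨hk2a, hk2b⟩ := hk2
  interval_cases e <;> interval_cases f <;> interval_cases k <;> interval_cases k' <;> omega

lemma sub_and_disj {d : ℕ} (hd : 2 ≤ d) (x : ℤ) (p p' : ℕ × ℕ)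
    {N A B A' B' VA VB L L' : ℤ}
    (hN : N = (d:ℤ)^2)
    (hA : A = (p.1 : ℤ) * (d:ℤ) + (p.2 : ℤ)) (hB : B = (p.2 : ℤ) * (d:ℤ) + (p.1 : ℤ))
    (hA' : A' = (p'.1 : ℤ) * (d:ℤ) + (p'.2 : ℤ)) (hB' : B' = (p'.2 : ℤ) * (d:ℤ) + (p'.1 : ℤ))
    (hL : (B - A) % N = L) (hVA : (x - A) % N = VA)
    (hL' : (B' - A') % N = L') (hVB : (x - A') % N = VB)
    (h1 : VA + ((d:ℤ) - 2) ≤ L)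
    (h2 : L' < VB)
    (h3 : VB + ((d:ℤ) - 2) < N) :
    arcCC (circum d) (x : ℝ) ((x:ℝ) + ((d:ℝ) - 2)) ⊆ arcR d p ∧
      Disjoint (arcCC (circum d) (x:ℝ) ((x:ℝ) + ((d:ℝ)-2))) (arcR d p') := by
  have hd2 : (2:ℝ) ≤ (d:ℝ) := by exact_mod_cast hd
  have hd2' : (2:ℤ) ≤ (d:ℤ) := by exact_mod_cast hd
  have hN0 : (0:ℤ) < N := by rw [hN]; nlinarith
  have hcirc : circum d = ((N:ℤ):ℝ) := by rw [hN]; unfold circum; push_cast; ring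
  have hn0 : (0:ℝ) < circum d := by rw [hcirc]; exact_mod_cast hN0
  have hsub_eq : arcCC (circum d) (x:ℝ) ((x:ℝ) + ((d:ℝ)-2)) =
      (fun t : ℝ => (t : AddCircle (circum d))) '' Set.Icc (x:ℝ) ((x:ℝ) + ((d:ℝ)-2)) := by
    unfold arcCC
    rw [show (x:ℝ) + ((d:ℝ)-2) - x = (d:ℝ)-2 by ring,
      rmod_eq_self hn0 (by linarith) (by unfold circum; nlinarith)]
  have e1 : (x:ℝ) - ipt d p.1 p.2 = ((x - A : ℤ):ℝ) := by rw [hA]; unfold ipt; push_cast; ring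
  have e2 : ipt d p.2 p.1 - ipt d p.1 p.2 = ((B - A : ℤ):ℝ) := by
    rw [hA, hB]; unfold ipt; push_cast; ring
  have e3 : (x:ℝ) - ipt d p'.1 p'.2 = ((x - A' : ℤ):ℝ) := by rw [hA']; unfold ipt; push_cast; ring
  have e4 : ipt d p'.2 p'.1 - ipt d p'.1 p'.2 = ((B' - A' : ℤ):ℝ) := by
    rw [hA', hB']; unfold ipt; push_cast; ring
  constructor
  · rw [hsub_eq]
    show _ ⊆ (fun t : ℝ => (t : AddCircle (circum d))) ''
      Set.Icc (ipt d p.1 p.2) (ipt d p.1 p.2 + rmod (ipt d p.2 p.1 - ipt d p.1 p.2) (circum d))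
    apply arc_subset hn0
    rw [e1, e2, hcirc, rmod_intCast hN0, rmod_intCast hN0, hVA, hL]
    have : ((VA:ℤ):ℝ) + (((d:ℤ):ℤ) - 2 : ℤ) ≤ ((L:ℤ):ℝ) := by exact_mod_cast h1
    push_cast at this ⊢
    linarith
  · rw [hsub_eq]
    show Disjoint _ ((fun t : ℝ => (t : AddCircle (circum d))) ''
      Set.Icc (ipt d p'.1 p'.2) (ipt d p'.1 p'.2 + rmod (ipt d p'.2 p'.1 - ipt d p'.1 p'.2) (circum d)))
    apply arc_disjoint hn0
    · rw [e3, e4, hcirc, rmod_intCast hN0, rmod_intCast hN0, hVB, hL']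
      exact_mod_cast h2
    · rw [e3, hcirc, rmod_intCast hN0, hVB]
      have : ((VB:ℤ):ℝ) + (((d:ℤ)-2 : ℤ) : ℝ) < ((N:ℤ):ℝ) := by exact_mod_cast h3
      push_cast at this ⊢
      linarith


lemma mul_bounds {m D : ℤ} (h1 : 1 ≤ m) (h2 : m ≤ D - 1) (h3 : 2 ≤ D) :
    D - 1 ≤ m * (D-1) ∧ m * (D-1) ≤ D^2 - 2*D + 1 := ⟨by nlinarith, by nlinarith⟩

set_option maxHeartbeats 1000000 in
/-- for every `d ≥ 2` and any two distinct arcs `r, r'` of the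
construction `R`, one of the two arcs contains an integral subarc of length `d − 2`
disjoint from the other arc. -/
theorem exists_long_private_subarc (d : ℕ) (hd : 2 ≤ d)
    (q q' : ℕ × ℕ) (hq : q ∈ RIdx d) (hq' : q' ∈ RIdx d) (hne : q ≠ q') :
    ∃ x : ℤ,
      (arcCC (circum d) (x : ℝ) ((x : ℝ) + ((d : ℝ) - 2)) ⊆ arcR d q ∧
        Disjoint (arcCC (circum d) (x : ℝ) ((x : ℝ) + ((d : ℝ) - 2))) (arcR d q')) ∨
      (arcCC (circum d) (x : ℝ) ((x : ℝ) + ((d : ℝ) - 2)) ⊆ arcR d q' ∧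
        Disjoint (arcCC (circum d) (x : ℝ) ((x : ℝ) + ((d : ℝ) - 2))) (arcR d q)) := by
  obtain ⟨i, j⟩ := q
  obtain ⟨i', j'⟩ := q'
  obtain ⟨hi, hj, hij, hlen⟩ := hq
  obtain ⟨hi', hj', hij', hlen'⟩ := hq'
  have hd2 : (2:ℤ) ≤ (d:ℤ) := by exact_mod_cast hd
  obtain ⟨N, hN⟩ : ∃ N : ℤ, N = (d:ℤ)^2 := ⟨_, rfl⟩
  have hN0 : (0:ℤ) < N := by rw [hN]; nlinarith
  obtain ⟨A, hA⟩ : ∃ A : ℤ, A = (i:ℤ) * (d:ℤ) + (j:ℤ) := ⟨_, rfl⟩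
  obtain ⟨B, hB⟩ : ∃ B : ℤ, B = (j:ℤ) * (d:ℤ) + (i:ℤ) := ⟨_, rfl⟩
  obtain ⟨A', hA'⟩ : ∃ A' : ℤ, A' = (i':ℤ) * (d:ℤ) + (j':ℤ) := ⟨_, rfl⟩
  obtain ⟨B', hB'⟩ : ∃ B' : ℤ, B' = (j':ℤ) * (d:ℤ) + (i':ℤ) := ⟨_, rfl⟩
  have hiZ : (i:ℤ) < d := by exact_mod_cast hi
  have hjZ : (j:ℤ) < d := by exact_mod_cast hj
  have hiZ' : (i':ℤ) < d := by exact_mod_cast hi'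
  have hjZ' : (j':ℤ) < d := by exact_mod_cast hj'
  -- representations of the four mod quantities
  obtain ⟨L, kL, hLrep, hL0, hL1⟩ : ∃ L k, B - A = L + N*k ∧ 0 ≤ L ∧ L < N :=
    ⟨(B-A) % N, (B-A)/N, by rw [Int.emod_def]; ring,
      Int.emod_nonneg _ hN0.ne', Int.emod_lt_of_pos _ hN0⟩
  obtain ⟨L', kL', hLrep', hL0', hL1'⟩ : ∃ L k, B' - A' = L + N*k ∧ 0 ≤ L ∧ L < N :=
    ⟨(B'-A') % N, (B'-A')/N, by rw [Int.emod_def]; ring,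
      Int.emod_nonneg _ hN0.ne', Int.emod_lt_of_pos _ hN0⟩
  obtain ⟨α, kα, hαrep, hα0, hα1⟩ : ∃ a k, A' - A = a + N*k ∧ 0 ≤ a ∧ a < N :=
    ⟨(A'-A) % N, (A'-A)/N, by rw [Int.emod_def]; ring,
      Int.emod_nonneg _ hN0.ne', Int.emod_lt_of_pos _ hN0⟩
  obtain ⟨β, kβ, hβrep, hβ0, hβ1⟩ : ∃ b k, B' - B = b + N*k ∧ 0 ≤ b ∧ b < N :=
    ⟨(B'-B) % N, (B'-B)/N, by rw [Int.emod_def]; ring,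
      Int.emod_nonneg _ hN0.ne', Int.emod_lt_of_pos _ hN0⟩
  have hLmod : (B - A) % N = L := emod_eq_of_rep hLrep hL0 hL1
  have hLmod' : (B' - A') % N = L' := emod_eq_of_rep hLrep' hL0' hL1'
  -- lower bounds on lengths
  have hdL : (d:ℤ) - 1 ≤ L := by
    have hBA : B - A = ((j:ℤ) - i) * ((d:ℤ) - 1) := by rw [hA, hB]; ring
    rcases lt_or_gt_of_ne (show (i:ℤ) ≠ (j:ℤ) by exact_mod_cast hij) with h | h
    · obtain ⟨hb1, hb2⟩ := mul_bounds (m := (j:ℤ) - i) (by omega) (by omega) hd2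
      have hge : (d:ℤ) - 1 ≤ B - A := by rw [hBA]; linarith
      have hlt : B - A < N := by rw [hBA, hN]; linarith
      have : (B - A) % N = B - A := emod_eq_of_rep (k := 0) (by ring) (by omega) hlt
      omega
    · obtain ⟨hb1, hb2⟩ := mul_bounds (m := (i:ℤ) - j) (by omega) (by omega) hd2
      have heq : ((j:ℤ) - i) * ((d:ℤ) - 1) = -(((i:ℤ) - j) * ((d:ℤ) - 1)) := by ring
      have hle : B - A ≤ -((d:ℤ) - 1) := by rw [hBA, heq]; linarith
      have hge : -(N) + 2*(d:ℤ) - 1 ≤ B - A := by rw [hBA, heq, hN]; linarith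
      have : (B - A) % N = B - A + N :=
        emod_eq_of_rep (k := -1) (by ring) (by omega) (by omega)
      omega
  have hdL' : (d:ℤ) - 1 ≤ L' := by
    have hBA : B' - A' = ((j':ℤ) - i') * ((d:ℤ) - 1) := by rw [hA', hB']; ring
    rcases lt_or_gt_of_ne (show (i':ℤ) ≠ (j':ℤ) by exact_mod_cast hij') with h | h
    · obtain ⟨hb1, hb2⟩ := mul_bounds (m := (j':ℤ) - i') (by omega) (by omega) hd2
      have hge : (d:ℤ) - 1 ≤ B' - A' := by rw [hBA]; linarith
      have hlt : B' - A' < N := by rw [hBA, hN]; linarith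
      have : (B' - A') % N = B' - A' := emod_eq_of_rep (k := 0) (by ring) (by omega) hlt
      omega
    · obtain ⟨hb1, hb2⟩ := mul_bounds (m := (i':ℤ) - j') (by omega) (by omega) hd2
      have heq : ((j':ℤ) - i') * ((d:ℤ) - 1) = -(((i':ℤ) - j') * ((d:ℤ) - 1)) := by ring
      have hle : B' - A' ≤ -((d:ℤ) - 1) := by rw [hBA, heq]; linarith
      have hge : -(N) + 2*(d:ℤ) - 1 ≤ B' - A' := by rw [hBA, heq, hN]; linarith
      have : (B' - A') % N = B' - A' + N :=
        emod_eq_of_rep (k := -1) (by ring) (by omega) (by omega)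
      omega
  -- upper bounds 4L ≤ N from membership in RIdx
  have hcirc : circum d = ((N:ℤ):ℝ) := by rw [hN]; unfold circum; push_cast; ring
  have h4L : 4*L ≤ N := by
    unfold arcLen at hlen
    rw [show ipt d j i - ipt d i j = ((B - A : ℤ):ℝ) by rw [hA, hB]; unfold ipt; push_cast; ring,
      hcirc, rmod_intCast hN0, hLmod] at hlen
    have : ((4*L : ℤ):ℝ) ≤ ((N:ℤ):ℝ) := by push_cast; linarith
    exact_mod_cast this
  have h4L' : 4*L' ≤ N := by
    unfold arcLen at hlen'
    rw [show ipt d j' i' - ipt d i' j' = ((B' - A' : ℤ):ℝ) by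
        rw [hA', hB']; unfold ipt; push_cast; ring,
      hcirc, rmod_intCast hN0, hLmod'] at hlen'
    have : ((4*L' : ℤ):ℝ) ≤ ((N:ℤ):ℝ) := by push_cast; linarith
    exact_mod_cast this
  -- Branch A : start segment of q avoids q'
  by_cases hbA : (d:ℤ) - 1 ≤ α ∧ α ≤ N - 1 - L'
  · have m1 : (A - A) % N = 0 := emod_eq_of_rep (k := 0) (by ring) le_rfl hN0
    have m2 : (A - A') % N = N - α :=
      emod_eq_of_rep (k := -kα - 1) (by linear_combination -hαrep) (by omega) (by omega)
    exact ⟨A, Or.inl (sub_and_disj hd A (i,j) (i',j') hN hA hB hA' hB' hLmod m1 hLmod' m2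
      (by omega) (by omega) (by omega))⟩
  -- Branch B : start segment of q' avoids q
  by_cases hbB : L + 1 ≤ α ∧ α ≤ N - (d:ℤ) + 1
  · have m1 : (A' - A') % N = 0 := emod_eq_of_rep (k := 0) (by ring) le_rfl hN0
    have m2 : (A' - A) % N = α :=
      emod_eq_of_rep (k := kα) (by linear_combination hαrep) (by omega) (by omega)
    exact ⟨A', Or.inr (sub_and_disj hd A' (i',j') (i,j) hN hA' hB' hA hB hLmod' m1 hLmod m2
      (by omega) (by omega) (by omega))⟩
  -- Branch D : end segment of q' avoids q
  by_cases hbD : (d:ℤ) - 1 ≤ β ∧ β ≤ N - 1 - L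
  · have m1 : (B' - ((d:ℤ) - 2) - A') % N = L' - ((d:ℤ) - 2) :=
      emod_eq_of_rep (k := kL') (by linear_combination hLrep') (by omega) (by omega)
    have m2 : (B' - ((d:ℤ) - 2) - A) % N = β + L - ((d:ℤ) - 2) :=
      emod_eq_of_rep (k := kβ + kL) (by linear_combination hβrep + hLrep) (by omega) (by omega)
    exact ⟨B' - ((d:ℤ) - 2), Or.inr (sub_and_disj hd (B' - ((d:ℤ)-2)) (i',j') (i,j)
      hN hA' hB' hA hB hLmod' m1 hLmod m2 (by omega) (by omega) (by omega))⟩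
  -- Branch C : end segment of q avoids q'
  by_cases hbC : N - L ≤ β ∧ β ≤ N - (d:ℤ) + 1
  · have m1 : (B - ((d:ℤ) - 2) - A) % N = L - ((d:ℤ) - 2) :=
      emod_eq_of_rep (k := kL) (by linear_combination hLrep) (by omega) (by omega)
    have m2 : (B - ((d:ℤ) - 2) - A') % N = N + L' - β - ((d:ℤ) - 2) :=
      emod_eq_of_rep (k := kL' - kβ - 1) (by linear_combination hLrep' - hβrep)
        (by omega) (by omega)
    exact ⟨B - ((d:ℤ) - 2), Or.inl (sub_and_disj hd (B - ((d:ℤ)-2)) (i,j) (i',j')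
      hN hA hB hA' hB' hLmod m1 hLmod' m2 (by omega) (by omega) (by omega))⟩
  -- Otherwise : the two arcs are close at both ends, contradiction
  exfalso
  have hαc : α ≤ (d:ℤ) - 2 ∨ N - ((d:ℤ) - 2) ≤ α := by omega
  have hβc : β ≤ (d:ℤ) - 2 ∨ N - ((d:ℤ) - 2) ≤ β := by omega
  obtain ⟨s, ks, hs_eq, hs1, hs2⟩ :
      ∃ s ks, A' - A = s + N*ks ∧ -((d:ℤ)-2) ≤ s ∧ s ≤ (d:ℤ)-2 := by
    rcases hαc with h | h
    · exact ⟨α, kα, hαrep, by omega, h⟩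
    · exact ⟨α - N, kα + 1, by linear_combination hαrep, by omega, by omega⟩
  obtain ⟨t, kt, ht_eq, ht1, ht2⟩ :
      ∃ t kt, B' - B = t + N*kt ∧ -((d:ℤ)-2) ≤ t ∧ t ≤ (d:ℤ)-2 := by
    rcases hβc with h | h
    · exact ⟨β, kβ, hβrep, by omega, h⟩
    · exact ⟨β - N, kβ + 1, by linear_combination hβrep, by omega, by omega⟩
  have h1 : ((i':ℤ) - i) * (d:ℤ) + ((j':ℤ) - j) = s + ks * (d:ℤ)^2 := by
    rw [hA, hA', hN] at hs_eq; linear_combination hs_eq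
  have h2 : ((j':ℤ) - j) * (d:ℤ) + ((i':ℤ) - i) = t + kt * (d:ℤ)^2 := by
    rw [hB, hB', hN] at ht_eq; linear_combination ht_eq
  rcases key_int hd2 (by omega) (by omega) (by omega) (by omega) hs1 hs2 ht1 ht2 h1 h2 with
    h | h | h
  · exact hne (by rw [show i = i' by omega, show j = j' by omega])
  · omega
  · omega
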